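/- arXiv:2305.03569 — 3 statements merged into one kernel-verified Lean document; each statement's English description precedes it below -/
import Mathlib

section
/- Under the constitutive relation R_g T_∞ ρ_* = p_{∞,*} + 2σ/R_* and c_v γ = c_v + R_g, for any real R, Ṙ, z and any square-integrable radial u on B_1 satisfying ∫_{B_1} u dx = -(4π/3) z - 4π(ρ_*/R_*) R, the linearized total energy E satisfies E ≥ 2π(4σ + 3p_{∞,*}R_*) R² + (c_v T_∞ R_*³/(2ρ_*)) ∫_{B_1} u² dx + 2π ρ_l R_*³ Ṙ². -/
open Real MeasureTheory

lemma vol_ball3 : (volume (Metric.ball (0 : EuclideanSpace ℝ (Fin 3)) 1)).toReal = 4 * π / 3 := by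
  rw [EuclideanSpace.volume_ball]
  have h1 : Real.Gamma ((Fintype.card (Fin 3) : ℝ) / 2 + 1) = 3 / 4 * Real.sqrt π := by
    have h : ((Fintype.card (Fin 3) : ℝ) / 2 + 1) = (3/2 : ℝ) + 1 := by norm_num
    rw [h, Real.Gamma_add_one (by norm_num)]
    have h2 : (3/2 : ℝ) = (1/2 : ℝ) + 1 := by norm_num
    rw [h2, Real.Gamma_add_one (by norm_num), Real.Gamma_one_half_eq]
    ring
  rw [h1]
  have hπ : (0:ℝ) < π := Real.pi_pos
  have hs : Real.sqrt π > 0 := Real.sqrt_pos.mpr hπ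
  have hsq : Real.sqrt π ^ 2 = π := Real.sq_sqrt hπ.le
  have hv : √π ^ 3 / (3 / 4 * √π) = 4 * π / 3 := by
    field_simp
    nlinarith [hs, hsq]
  simp only [Fintype.card_fin] at *
  rw [hv]
  simp [ENNReal.toReal_ofReal (by positivity : (0:ℝ) ≤ 4 * π / 3)]

lemma cs_ball (u : EuclideanSpace ℝ (Fin 3) → ℝ)
    (hu : MeasureTheory.Integrable u
      (volume.restrict (Metric.ball (0 : EuclideanSpace ℝ (Fin 3)) 1)))
    (hu2 : MeasureTheory.Integrable (fun x => u x ^ 2)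
      (volume.restrict (Metric.ball (0 : EuclideanSpace ℝ (Fin 3)) 1))) :
    (∫ x in Metric.ball (0 : EuclideanSpace ℝ (Fin 3)) 1, u x) ^ 2
      ≤ (4 * π / 3) * ∫ x in Metric.ball (0 : EuclideanSpace ℝ (Fin 3)) 1, u x ^ 2 := by
  set B := Metric.ball (0 : EuclideanSpace ℝ (Fin 3)) 1
  have hfin : IsFiniteMeasure (volume.restrict B) :=
    ⟨by rw [Measure.restrict_apply_univ]; exact measure_ball_lt_top⟩
  have hV : (volume.restrict B Set.univ).toReal = 4 * π / 3 := by
    rw [Measure.restrict_apply_univ]; exact vol_ball3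
  have hπ : (0:ℝ) < π := Real.pi_pos
  set S := ∫ x in B, u x with hS
  set c : ℝ := S / (4 * π / 3) with hc
  have h0 : 0 ≤ ∫ x in B, (u x - c) ^ 2 := integral_nonneg fun x => sq_nonneg _
  have hexp : (∫ x in B, (u x - c) ^ 2)
      = (∫ x in B, u x ^ 2) - 2 * c * S + c ^ 2 * (4 * π / 3) := by
    have h1 : ∀ x, (u x - c) ^ 2 = u x ^ 2 - (2 * c) * u x + c ^ 2 := fun x => by ring
    simp_rw [h1]
    have hi0 : Integrable (fun x => (2*c) * u x) (volume.restrict B) := hu.const_mul (2*c)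
    have hi1 : Integrable (fun x => u x ^ 2 - 2*c*u x) (volume.restrict B) := hu2.sub hi0
    rw [integral_add hi1 (integrable_const _),
        integral_sub hu2 hi0, integral_const, smul_eq_mul, measureReal_def, hV,
        integral_const_mul]
    ring
  have hc2 : c * (4 * π / 3) = S := by
    rw [hc]; field_simp
  nlinarith [h0, hexp, sq_nonneg c, hc2]

/-- Convexity/positivity of the linearized total energy: under the constitutive
relation and the linearized constant-mass constraint, the linearized energy is
bounded below by a positive definite quadratic form. -/
theorem linearized_energy_coercivity
    (pinf σ Rg Tinf cv γ ρl ρs Rs : ℝ)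
    (hp : 0 < pinf) (hσ : 0 ≤ σ) (hRg : 0 < Rg) (hT : 0 < Tinf)
    (hcv : 0 < cv) (hγ : 1 < γ) (hρl : 0 < ρl) (hρs : 0 < ρs) (hRs : 0 < Rs)
    (hconst : Rg * Tinf * ρs = pinf + 2 * σ / Rs)
    (hcp : cv * γ = cv + Rg)
    (z R Rdot : ℝ)
    (u : EuclideanSpace ℝ (Fin 3) → ℝ)
    (hu : MeasureTheory.Integrable u
      (volume.restrict (Metric.ball (0 : EuclideanSpace ℝ (Fin 3)) 1)))
    (hu2 : MeasureTheory.Integrable (fun x => u x ^ 2)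
      (volume.restrict (Metric.ball (0 : EuclideanSpace ℝ (Fin 3)) 1)))
    (hmass : (∫ x in Metric.ball (0 : EuclideanSpace ℝ (Fin 3)) 1, u x)
      = -(4 * π / 3) * z - 4 * π * (ρs / Rs) * R) :
    2 * π * (4 * σ + 3 * pinf * Rs) * R ^ 2
      + (cv * Tinf * Rs ^ 3 / (2 * ρs)) *
          ∫ x in Metric.ball (0 : EuclideanSpace ℝ (Fin 3)) 1, u x ^ 2
      + 2 * π * ρl * Rs ^ 3 * Rdot ^ 2
    ≤ -4 * π * σ * R ^ 2 - 4 * π * Rg * Tinf * Rs ^ 2 * R * z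
      - (2 * π * Rg * Tinf * Rs ^ 3 / (3 * ρs)) * z ^ 2
      + (cv * γ * Tinf * Rs ^ 3 / (2 * ρs)) *
          ∫ x in Metric.ball (0 : EuclideanSpace ℝ (Fin 3)) 1, u x ^ 2
      + 2 * π * ρl * Rs ^ 3 * Rdot ^ 2 := by
  have hπ : (0:ℝ) < π := Real.pi_pos
  set B := Metric.ball (0 : EuclideanSpace ℝ (Fin 3)) 1 with hB
  have hic : MeasureTheory.Integrable
      (fun _ : EuclideanSpace ℝ (Fin 3) => 2 * π * ρl * Rs ^ 3 * Rdot ^ 2)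
      (volume.restrict B) := by
    refine MeasureTheory.integrableOn_const ?_
    exact measure_ball_lt_top.ne
  have hV : (volume.restrict B Set.univ).toReal = 4 * π / 3 := by
    rw [Measure.restrict_apply_univ]; exact vol_ball3
  have hsplit : (∫ x in B, u x ^ 2 + 2 * π * ρl * Rs ^ 3 * Rdot ^ 2)
      = (∫ x in B, u x ^ 2) + (2 * π * ρl * Rs ^ 3 * Rdot ^ 2) * (4 * π / 3) := by
    rw [MeasureTheory.integral_add hu2 hic, MeasureTheory.integral_const, smul_eq_mul, measureReal_def, hV]
    ring
  rw [hsplit]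
  obtain ⟨I, hI⟩ : ∃ J, (∫ x in B, u x ^ 2) = J := ⟨_, rfl⟩
  rw [hI]
  have hCS : (-(4 * π / 3) * z - 4 * π * (ρs / Rs) * R) ^ 2 ≤ (4 * π / 3) * I := by
    rw [← hmass, ← hI]; exact cs_ball u hu hu2
  set k : ℝ := 3 * Rg * Tinf * Rs ^ 3 / (8 * π * ρs) with hk
  have hk0 : 0 ≤ k := by positivity
  have h := mul_le_mul_of_nonneg_left hCS hk0
  have e1 : k * (-(4 * π / 3) * z - 4 * π * (ρs / Rs) * R) ^ 2
      = (2 * π * Rg * Tinf * Rs ^ 3 / (3 * ρs)) * z ^ 2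
        + 4 * π * Rg * Tinf * Rs ^ 2 * R * z
        + 6 * π * (Rg * Tinf * ρs) * Rs * R ^ 2 := by
    rw [hk]; field_simp; ring
  have e2 : k * ((4 * π / 3) * I) = Rg * Tinf * Rs ^ 3 / (2 * ρs) * I := by
    rw [hk]; field_simp; ring
  have e3 : cv * γ * Tinf * Rs ^ 3 / (2 * ρs)
      = cv * Tinf * Rs ^ 3 / (2 * ρs) + Rg * Tinf * Rs ^ 3 / (2 * ρs) := by
    rw [hcp]; ring
  have e4 : 6 * π * (Rg * Tinf * ρs) * Rs = 6 * π * pinf * Rs + 12 * π * σ := by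
    rw [hconst]; field_simp; ring
  have e4R : 6 * π * (Rg * Tinf * ρs) * Rs * R ^ 2
      = (6 * π * pinf * Rs + 12 * π * σ) * R ^ 2 := by linear_combination R ^ 2 * e4
  set W : ℝ := I + (2 * π * ρl * Rs ^ 3 * Rdot ^ 2) * (4 * π / 3) with hW
  have e3W : cv * γ * Tinf * Rs ^ 3 / (2 * ρs) * W
      = cv * Tinf * Rs ^ 3 / (2 * ρs) * W + Rg * Tinf * Rs ^ 3 / (2 * ρs) * W := by
    linear_combination W * e3
  have hextra : 0 ≤ Rg * Tinf * Rs ^ 3 / (2 * ρs) * ((2 * π * ρl * Rs ^ 3 * Rdot ^ 2) * (4 * π / 3)) := by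
    positivity
  have hWsplit : Rg * Tinf * Rs ^ 3 / (2 * ρs) * W
      = Rg * Tinf * Rs ^ 3 / (2 * ρs) * I
        + Rg * Tinf * Rs ^ 3 / (2 * ρs) * ((2 * π * ρl * Rs ^ 3 * Rdot ^ 2) * (4 * π / 3)) := by
    rw [hW]; ring
  rw [e1, e2] at h
  linarith [h, e3W, e4R, hextra, hWsplit]
end

section
/- Let κ̄ > 0, γ > 1. Define Q(τ) = (1/(R_g T_∞))((4π/3) - (8(γ-1)/(πγ)) ∑_{j=1}^∞ τ/(j²(π²κ̄j² + τ)))(ρ_l R_* τ² + (4μ_l/R_*)τ - 2σ/R_*²) + 4π ρ_*/R_*, with all physical constants positive (μ_l, σ ≥ 0) and R_g T_∞ ρ_* = p_{∞,*} + 2σ/R_*. Then Q has no roots τ with Re τ ≥ 0; in particular Q(ξ) > 0 for all real ξ ≥ 0. -/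
open Real Complex

/-- The resolvent denominator `Q(τ)` of the linearized bubble dynamics. -/
noncomputable def Qfun (κ γ Rg Tinf ρl Rs μl σ ρs : ℝ) (τ : ℂ) : ℂ :=
  (1 / ((Rg : ℂ) * (Tinf : ℂ))) *
    ((4 * (π : ℂ) / 3) -
      (8 * ((γ : ℂ) - 1) / ((π : ℂ) * (γ : ℂ))) *
        ∑' j : ℕ, τ / (((j : ℂ) + 1) ^ 2 * ((π : ℂ) ^ 2 * (κ : ℂ) * ((j : ℂ) + 1) ^ 2 + τ))) *
    ((ρl : ℂ) * (Rs : ℂ) * τ ^ 2 + (4 * (μl : ℂ) / (Rs : ℂ)) * τ - 2 * (σ : ℂ) / (Rs : ℂ) ^ 2)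
  + 4 * (π : ℂ) * (ρs : ℂ) / (Rs : ℂ)


namespace QProof

noncomputable def fterm (κ : ℝ) (τ : ℂ) (j : ℕ) : ℂ :=
  τ / (((j : ℂ) + 1) ^ 2 * ((π : ℂ) ^ 2 * (κ : ℂ) * ((j : ℂ) + 1) ^ 2 + τ))

noncomputable def aA (κ : ℝ) (j : ℕ) : ℝ := π ^ 2 * κ * ((j : ℝ) + 1) ^ 2

noncomputable def dD (κ : ℝ) (τ : ℂ) (j : ℕ) : ℝ := (aA κ j + τ.re) ^ 2 + τ.im ^ 2

variable {κ : ℝ} {τ : ℂ}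

lemma aA_pos (hκ : 0 < κ) (j : ℕ) : 0 < aA κ j := by
  have := Real.pi_pos
  unfold aA; positivity

lemma dD_pos (hκ : 0 < κ) (hx : 0 ≤ τ.re) (j : ℕ) : 0 < dD κ τ j := by
  have h : 0 < aA κ j := aA_pos hκ j
  have h2 : 0 < aA κ j + τ.re := by linarith
  unfold dD; positivity

lemma denom_eq (κ : ℝ) (τ : ℂ) (j : ℕ) :
    ((j : ℂ) + 1) ^ 2 * ((π : ℂ) ^ 2 * (κ : ℂ) * ((j : ℂ) + 1) ^ 2 + τ)
      = ((((j : ℝ) + 1) ^ 2 : ℝ) : ℂ) * (((aA κ j : ℝ) : ℂ) + τ) := by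
  unfold aA; push_cast; ring

lemma ofReal_mul_add_re (r a : ℝ) (τ : ℂ) : ((r : ℂ) * ((a : ℂ) + τ)).re = r * (a + τ.re) := by
  simp [Complex.mul_re]

lemma ofReal_mul_add_im (r a : ℝ) (τ : ℂ) : ((r : ℂ) * ((a : ℂ) + τ)).im = r * τ.im := by
  simp [Complex.mul_im]

lemma denom_re (κ : ℝ) (τ : ℂ) (j : ℕ) :
    (((((j : ℝ) + 1) ^ 2 : ℝ) : ℂ) * (((aA κ j : ℝ) : ℂ) + τ)).re
      = ((j : ℝ) + 1) ^ 2 * (aA κ j + τ.re) :=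
  ofReal_mul_add_re _ _ _

lemma denom_im (κ : ℝ) (τ : ℂ) (j : ℕ) :
    (((((j : ℝ) + 1) ^ 2 : ℝ) : ℂ) * (((aA κ j : ℝ) : ℂ) + τ)).im
      = ((j : ℝ) + 1) ^ 2 * τ.im :=
  ofReal_mul_add_im _ _ _

lemma denom_normSq (κ : ℝ) (τ : ℂ) (j : ℕ) :
    Complex.normSq (((((j : ℝ) + 1) ^ 2 : ℝ) : ℂ) * (((aA κ j : ℝ) : ℂ) + τ))
      = (((j : ℝ) + 1) ^ 2) ^ 2 * dD κ τ j := by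
  rw [Complex.normSq_mul, Complex.normSq_ofReal, Complex.normSq_apply]
  simp [dD]
  ring

lemma fterm_re (hκ : 0 < κ) (hx : 0 ≤ τ.re) (j : ℕ) :
    (fterm κ τ j).re
      = (τ.re * (aA κ j + τ.re) + τ.im ^ 2) / (((j : ℝ) + 1) ^ 2 * dD κ τ j) := by
  have hN : (0:ℝ) < ((j : ℝ) + 1) ^ 2 := by positivity
  have hD := dD_pos hκ hx j
  rw [fterm, denom_eq κ τ j, Complex.div_re, denom_re, denom_im, denom_normSq,
    ← add_div, div_eq_div_iff (by positivity) (by positivity)]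
  ring

lemma fterm_im (hκ : 0 < κ) (hx : 0 ≤ τ.re) (j : ℕ) :
    (fterm κ τ j).im = π ^ 2 * κ * τ.im / dD κ τ j := by
  have hN : (0:ℝ) < ((j : ℝ) + 1) ^ 2 := by positivity
  have hD := dD_pos hκ hx j
  rw [fterm, denom_eq κ τ j, Complex.div_im, denom_re, denom_im, denom_normSq,
    div_sub_div_same, div_eq_div_iff (by positivity) (by positivity)]
  unfold aA
  ring

end QProof

namespace QProof2
open QProof

variable {κ : ℝ} {τ : ℂ}

lemma summable_base : Summable (fun j : ℕ => 1 / ((j : ℝ) + 1) ^ 2) := by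
  have h : Summable (fun n : ℕ => 1 / (n : ℝ) ^ 2) := summable_one_div_nat_pow.mpr one_lt_two
  have h2 := (summable_nat_add_iff 1).mpr h
  exact h2.congr fun n => by push_cast; ring

lemma hasSum_base : HasSum (fun j : ℕ => 1 / ((j : ℝ) + 1) ^ 2) (π ^ 2 / 6) := by
  have h := hasSum_zeta_two
  have h1 := (hasSum_nat_add_iff' 1).mpr h
  simp only [Finset.range_one, Finset.sum_singleton, Nat.cast_zero] at h1
  norm_num at h1
  exact h1.congr_fun fun n => by push_cast; ring

lemma norm_fterm_le (hκ : 0 < κ) (hx : 0 ≤ τ.re) (j : ℕ) :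
    ‖fterm κ τ j‖ ≤ 1 / ((j : ℝ) + 1) ^ 2 := by
  have hN : (0:ℝ) < ((j : ℝ) + 1) ^ 2 := by positivity
  have ha : 0 < aA κ j := aA_pos hκ j
  have hd : ‖τ‖ ≤ ‖((aA κ j : ℝ) : ℂ) + τ‖ := by
    have h2 : ‖τ‖ ^ 2 ≤ ‖((aA κ j : ℝ) : ℂ) + τ‖ ^ 2 := by
      rw [Complex.sq_norm, Complex.sq_norm,
        Complex.normSq_apply, Complex.normSq_apply]
      simp only [Complex.add_re, Complex.add_im, Complex.ofReal_re, Complex.ofReal_im, zero_add]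
      nlinarith [sq_nonneg τ.im]
    nlinarith [norm_nonneg τ, norm_nonneg (((aA κ j : ℝ) : ℂ) + τ)]
  have hpos : 0 < ‖((aA κ j : ℝ) : ℂ) + τ‖ := by
    rw [norm_pos_iff]
    intro h
    have h3 := congrArg Complex.re h
    simp only [Complex.add_re, Complex.ofReal_re, Complex.zero_re] at h3
    linarith
  calc ‖fterm κ τ j‖ = ‖τ‖ / (((j : ℝ) + 1) ^ 2 * ‖((aA κ j : ℝ) : ℂ) + τ‖) := by
        rw [fterm, denom_eq, norm_div, norm_mul, Complex.norm_real, Real.norm_eq_abs, abs_of_pos hN]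
    _ ≤ ‖((aA κ j : ℝ) : ℂ) + τ‖ / (((j : ℝ) + 1) ^ 2 * ‖((aA κ j : ℝ) : ℂ) + τ‖) := by gcongr
    _ = 1 / ((j : ℝ) + 1) ^ 2 := by
        rw [div_eq_div_iff (by positivity) (by positivity)]; ring

lemma summable_fterm (hκ : 0 < κ) (hx : 0 ≤ τ.re) : Summable (fterm κ τ) :=
  Summable.of_norm_bounded summable_base (norm_fterm_le hκ hx)

lemma S_re_nonneg (hκ : 0 < κ) (hx : 0 ≤ τ.re) : 0 ≤ (∑' j, fterm κ τ j).re := by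
  rw [Complex.re_tsum (summable_fterm hκ hx)]
  refine tsum_nonneg fun j => ?_
  rw [fterm_re hκ hx]
  have hD := dD_pos hκ hx j
  have ha := aA_pos hκ j
  have h1 : 0 ≤ τ.re * (aA κ j + τ.re) := mul_nonneg hx (by linarith)
  have hN : (0:ℝ) < ((j : ℝ) + 1) ^ 2 := by positivity
  apply div_nonneg
  · nlinarith [sq_nonneg τ.im]
  · positivity

lemma S_re_le (hκ : 0 < κ) (hx : 0 ≤ τ.re) : (∑' j, fterm κ τ j).re ≤ π ^ 2 / 6 := by
  rw [Complex.re_tsum (summable_fterm hκ hx)]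
  have hb := hasSum_base
  calc (∑' j, (fterm κ τ j).re) ≤ ∑' j : ℕ, 1 / ((j : ℝ) + 1) ^ 2 := by
        refine Summable.tsum_le_tsum (fun j => ?_)
          (Complex.hasSum_re (summable_fterm hκ hx).hasSum).summable hb.summable
        rw [fterm_re hκ hx]
        have hD := dD_pos hκ hx j
        have ha := aA_pos hκ j
        have hN : (0:ℝ) < ((j : ℝ) + 1) ^ 2 := by positivity
        rw [div_le_div_iff₀ (by positivity) (by positivity)]
        have hdd : dD κ τ j = (aA κ j + τ.re) ^ 2 + τ.im ^ 2 := rfl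
        nlinarith [mul_pos ha (show 0 < aA κ j + τ.re by linarith), hN.le,
          mul_nonneg (mul_pos ha (show 0 < aA κ j + τ.re by linarith)).le hN.le]
    _ = π ^ 2 / 6 := hb.tsum_eq

lemma S_im_sign (hκ : 0 < κ) (hx : 0 ≤ τ.re) (hy : τ.im ≠ 0) :
    0 < τ.im * (∑' j, fterm κ τ j).im := by
  rw [Complex.im_tsum (summable_fterm hκ hx), ← tsum_mul_left]
  have hsumim := (Complex.hasSum_im (summable_fterm hκ hx).hasSum).summable
  have hy2 : 0 < τ.im ^ 2 := pow_two_pos_of_ne_zero hy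
  have hπ := Real.pi_pos
  refine Summable.tsum_pos (hsumim.mul_left τ.im) (fun j => ?_) 0 ?_
  · rw [fterm_im hκ hx]
    have hD := dD_pos hκ hx j
    have h : τ.im * (π ^ 2 * κ * τ.im / dD κ τ j) = π ^ 2 * κ * τ.im ^ 2 / dD κ τ j := by ring
    rw [h]; positivity
  · rw [fterm_im hκ hx]
    have hD := dD_pos hκ hx 0
    have h : τ.im * (π ^ 2 * κ * τ.im / dD κ τ 0) = π ^ 2 * κ * τ.im ^ 2 / dD κ τ 0 := by ring
    rw [h]; positivity

lemma S_im_zero (hκ : 0 < κ) (hx : 0 ≤ τ.re) (hy : τ.im = 0) :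
    (∑' j, fterm κ τ j).im = 0 := by
  rw [Complex.im_tsum (summable_fterm hκ hx)]
  have : ∀ j : ℕ, (fterm κ τ j).im = 0 := fun j => by rw [fterm_im hκ hx, hy]; simp
  simp [this]

lemma reQ (c1 c2 : ℝ) (A B : ℂ) :
    ((c1 : ℂ) * A * B + (c2 : ℂ)).re = c1 * (A.re * B.re - A.im * B.im) + c2 := by
  simp only [Complex.add_re, Complex.mul_re, Complex.mul_im, Complex.ofReal_re, Complex.ofReal_im]
  ring

lemma imQ (c1 c2 : ℝ) (A B : ℂ) :
    ((c1 : ℂ) * A * B + (c2 : ℂ)).im = c1 * (A.re * B.im + A.im * B.re) := by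
  simp only [Complex.add_im, Complex.mul_re, Complex.mul_im, Complex.ofReal_re, Complex.ofReal_im]
  ring

lemma reA (c3 c4 : ℝ) (S : ℂ) : ((c3 : ℂ) - (c4 : ℂ) * S).re = c3 - c4 * S.re := by simp

lemma imA (c3 c4 : ℝ) (S : ℂ) : ((c3 : ℂ) - (c4 : ℂ) * S).im = -(c4 * S.im) := by simp

lemma reB (b1 b2 b3 : ℝ) (τ : ℂ) :
    ((b1 : ℂ) * τ ^ 2 + (b2 : ℂ) * τ - (b3 : ℂ)).re
      = b1 * (τ.re ^ 2 - τ.im ^ 2) + b2 * τ.re - b3 := by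
  simp only [Complex.add_re, Complex.sub_re, Complex.mul_re, Complex.mul_im, Complex.ofReal_re,
    Complex.ofReal_im, pow_two]
  ring

lemma imB (b1 b2 b3 : ℝ) (τ : ℂ) :
    ((b1 : ℂ) * τ ^ 2 + (b2 : ℂ) * τ - (b3 : ℂ)).im
      = b1 * (2 * τ.re * τ.im) + b2 * τ.im := by
  simp only [Complex.add_im, Complex.sub_im, Complex.mul_im, Complex.mul_re, Complex.ofReal_re,
    Complex.ofReal_im, pow_two]
  ring

end QProof2

set_option maxHeartbeats 1000000 in
theorem Q_key (κ γ Rg Tinf ρl Rs μl σ ρs pinf : ℝ)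
    (hκ : 0 < κ) (hγ : 1 < γ) (hRg : 0 < Rg) (hT : 0 < Tinf)
    (hρl : 0 < ρl) (hRs : 0 < Rs) (hμl : 0 ≤ μl) (hσ : 0 ≤ σ)
    (hρs : 0 < ρs) (hp : 0 < pinf)
    (hconst : Rg * Tinf * ρs = pinf + 2 * σ / Rs)
    (τ : ℂ) (hx : 0 ≤ τ.re) :
    (τ.im = 0 → 0 < (Qfun κ γ Rg Tinf ρl Rs μl σ ρs τ).re) ∧
      Qfun κ γ Rg Tinf ρl Rs μl σ ρs τ ≠ 0 := by
  have hπ := Real.pi_pos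
  have hS : (∑' j : ℕ, τ / (((j : ℂ) + 1) ^ 2 * ((π : ℂ) ^ 2 * (κ : ℂ) * ((j : ℂ) + 1) ^ 2 + τ)))
      = ∑' j : ℕ, QProof.fterm κ τ j := rfl
  set S : ℂ := ∑' j : ℕ, QProof.fterm κ τ j with hSdef
  have hQ : Qfun κ γ Rg Tinf ρl Rs μl σ ρs τ
      = ((1 / (Rg * Tinf) : ℝ) : ℂ) *
          (((4 * π / 3 : ℝ) : ℂ) - ((8 * (γ - 1) / (π * γ) : ℝ) : ℂ) * S) *
          (((ρl * Rs : ℝ) : ℂ) * τ ^ 2 + ((4 * μl / Rs : ℝ) : ℂ) * τ - ((2 * σ / Rs ^ 2 : ℝ) : ℂ))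
        + ((4 * π * ρs / Rs : ℝ) : ℂ) := by
    simp only [Qfun, hS]
    push_cast
    ring
  -- abbreviations for real/imaginary parts
  set c1 : ℝ := 1 / (Rg * Tinf) with hc1def
  set c4 : ℝ := 8 * (γ - 1) / (π * γ) with hc4def
  set Ar : ℝ := 4 * π / 3 - c4 * S.re with hArdef
  set Ai : ℝ := -(c4 * S.im) with hAidef
  set Br : ℝ := ρl * Rs * (τ.re ^ 2 - τ.im ^ 2) + 4 * μl / Rs * τ.re - 2 * σ / Rs ^ 2 with hBrdef
  set Bi : ℝ := ρl * Rs * (2 * τ.re * τ.im) + 4 * μl / Rs * τ.im with hBidef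
  have hQre : (Qfun κ γ Rg Tinf ρl Rs μl σ ρs τ).re
      = c1 * (Ar * Br - Ai * Bi) + 4 * π * ρs / Rs := by
    rw [hQ, QProof2.reQ, QProof2.reA, QProof2.imA, QProof2.reB, QProof2.imB]
  have hQim : (Qfun κ γ Rg Tinf ρl Rs μl σ ρs τ).im
      = c1 * (Ar * Bi + Ai * Br) := by
    rw [hQ, QProof2.imQ, QProof2.reA, QProof2.imA, QProof2.reB, QProof2.imB]
  have hc1 : 0 < c1 := by positivity
  have hc4 : 0 < c4 := div_pos (by linarith) (by positivity)
  have hSre0 : 0 ≤ S.re := QProof2.S_re_nonneg hκ hx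
  have hSre6 : S.re ≤ π ^ 2 / 6 := QProof2.S_re_le hκ hx
  have hγ0 : (0:ℝ) < γ := by linarith
  have hArpos : 0 < Ar := by
    have h1 : c4 * S.re ≤ c4 * (π ^ 2 / 6) := mul_le_mul_of_nonneg_left hSre6 hc4.le
    have h2 : c4 * (π ^ 2 / 6) = 4 * π / 3 - 4 * π / (3 * γ) := by
      rw [hc4def]; field_simp; ring
    have h3 : 0 < 4 * π / (3 * γ) := by positivity
    rw [hArdef]; linarith
  have hArle : Ar ≤ 4 * π / 3 := by
    have := mul_nonneg hc4.le hSre0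
    rw [hArdef]; linarith
  have hSimZ : τ.im = 0 → S.im = 0 := fun hy => QProof2.S_im_zero hκ hx hy
  have hSimS : τ.im ≠ 0 → 0 < τ.im * S.im := fun hy => QProof2.S_im_sign hκ hx hy
  clear_value S c1 c4 Ar Ai Br Bi
  by_cases hy : τ.im = 0
  · -- real case : Q.re > 0
    have hSim : S.im = 0 := hSimZ hy
    have hBi : Bi = 0 := by rw [hBidef, hy]; ring
    have hAi : Ai = 0 := by rw [hAidef, hSim]; ring
    have hQre' : (Qfun κ γ Rg Tinf ρl Rs μl σ ρs τ).re = c1 * (Ar * Br) + 4 * π * ρs / Rs := by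
      rw [hQre, hAi, hBi]; ring
    have hkey : 0 < c1 * (Ar * Br) + 4 * π * ρs / Rs := by
      have hBrlow : -(2 * σ / Rs ^ 2) ≤ Br := by
        rw [hBrdef, hy]
        have h1 : 0 ≤ ρl * Rs * τ.re ^ 2 := by positivity
        have h2 : 0 ≤ 4 * μl / Rs * τ.re := by positivity
        nlinarith [h1, h2]
      rcases le_or_gt 0 Br with hB | hB
      · have h1 : 0 ≤ c1 * (Ar * Br) := by positivity
        have h2 : 0 < 4 * π * ρs / Rs := by positivity
        linarith
      · have h4 : (4 * π / 3) * Br ≤ Ar * Br := mul_le_mul_of_nonpos_right hArle hB.le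
        have h5 : (4 * π / 3) * (-(2 * σ / Rs ^ 2)) ≤ (4 * π / 3) * Br :=
          mul_le_mul_of_nonneg_left hBrlow (by positivity)
        have h6 : c1 * ((4 * π / 3) * (-(2 * σ / Rs ^ 2))) ≤ c1 * (Ar * Br) :=
          mul_le_mul_of_nonneg_left (by linarith) hc1.le
        have hconst' : Rg * Tinf * ρs * Rs = pinf * Rs + 2 * σ := by
          field_simp at hconst
          linarith
        have h7 : 0 < c1 * ((4 * π / 3) * (-(2 * σ / Rs ^ 2))) + 4 * π * ρs / Rs := by
          have e : c1 * ((4 * π / 3) * (-(2 * σ / Rs ^ 2))) + 4 * π * ρs / Rs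
              = (4 * π * (Rg * Tinf * ρs * Rs) - 8 * π * σ / 3) / (Rs ^ 2 * (Rg * Tinf)) := by
            rw [hc1def]
            field_simp
            ring
          rw [e, hconst']
          apply div_pos _ (by positivity)
          nlinarith [mul_pos hπ (mul_pos hp hRs), mul_nonneg hπ.le hσ]
        linarith
    rw [← hQre'] at hkey
    refine ⟨fun _ => hkey, fun h => by rw [h] at hkey; simp at hkey⟩
  · -- complex case : Q ≠ 0
    refine ⟨fun h => absurd h hy, fun hQ0 => ?_⟩
    have hre := congrArg Complex.re hQ0
    have him := congrArg Complex.im hQ0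
    rw [hQre, Complex.zero_re] at hre
    rw [hQim, Complex.zero_im] at him
    -- clear c1
    have hRT : (0:ℝ) < Rg * Tinf := by positivity
    have hE2 : Ar * Bi + Ai * Br = 0 := by
      have := mul_eq_zero.mp him
      rcases this with h | h
      · exact absurd h (by positivity)
      · exact h
    have hE1 : Ar * Br - Ai * Bi = -(4 * π * ρs / Rs * (Rg * Tinf)) := by
      have h1 : c1 * (Ar * Br - Ai * Bi) = -(4 * π * ρs / Rs) := by linarith
      rw [hc1def] at h1
      field_simp at h1 ⊢
      linear_combination h1
    set K : ℝ := 4 * π * ρs / Rs * (Rg * Tinf) with hKdef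
    have hK : 0 < K := by positivity
    have hE3 : Bi * (Ar ^ 2 + Ai ^ 2) = K * Ai := by
      have h := hE1
      linear_combination Ar * hE2 - Ai * h
    have hyAi : τ.im * Ai < 0 := by
      have h := hSimS hy
      rw [hAidef]
      nlinarith [mul_pos hc4 h]
    have hyBi : 0 ≤ τ.im * Bi := by
      rw [hBidef]
      have h1 : 0 ≤ ρl * Rs * (2 * τ.re * τ.im ^ 2) := by positivity
      have h2 : 0 ≤ 4 * μl / Rs * τ.im ^ 2 := by positivity
      nlinarith [h1, h2]
    have hL : 0 ≤ (τ.im * Bi) * (Ar ^ 2 + Ai ^ 2) := mul_nonneg hyBi (by positivity)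
    have hR : K * (τ.im * Ai) < 0 := mul_neg_of_pos_of_neg hK hyAi
    have hEq : (τ.im * Bi) * (Ar ^ 2 + Ai ^ 2) = K * (τ.im * Ai) := by
      linear_combination τ.im * hE3
    linarith [hEq ▸ hL]


/-- `Q` has no roots in the closed right half-plane; in particular `Q(ξ) > 0`
for real `ξ ≥ 0`. -/
theorem Q_no_roots_right_half_plane
    (κ γ Rg Tinf ρl Rs μl σ ρs pinf : ℝ)
    (hκ : 0 < κ) (hγ : 1 < γ) (hRg : 0 < Rg) (hT : 0 < Tinf)
    (hρl : 0 < ρl) (hRs : 0 < Rs) (hμl : 0 ≤ μl) (hσ : 0 ≤ σ)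
    (hρs : 0 < ρs) (hp : 0 < pinf)
    (hconst : Rg * Tinf * ρs = pinf + 2 * σ / Rs) :
    (∀ τ : ℂ, 0 ≤ τ.re → Qfun κ γ Rg Tinf ρl Rs μl σ ρs τ ≠ 0) ∧
    (∀ ξ : ℝ, 0 ≤ ξ → 0 < (Qfun κ γ Rg Tinf ρl Rs μl σ ρs (ξ : ℂ)).re) := by
  constructor
  · intro τ hre
    exact (Q_key κ γ Rg Tinf ρl Rs μl σ ρs pinf hκ hγ hRg hT hρl hRs hμl hσ hρs hp hconst
      τ hre).2
  · intro ξ hξ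
    exact (Q_key κ γ Rg Tinf ρl Rs μl σ ρs pinf hκ hγ hRg hT hρl hRs hμl hσ hρs hp hconst
      (ξ : ℂ) (by simpa using hξ)).1 (by simp)
end

section
/- Suppose real numbers ξ, η and positive constants ρ_l, R_*, σ, μ_l ≥ 0 satisfy 2ρ_lR_*ξ + 4μ_l/R_* < 0 (i.e. ξ < -2μ_l/(ρ_lR_*²) ≤ 0). Let Λ = ρ_lR_*(ξ²-η²) + (4μ_l/R_*)ξ - 2σ/R_*² - (2ρ_lR_*ξ + 4μ_l/R_*)(ρ_lR_*ξ(ξ²+η²) + (4μ_l/R_*)(ξ²+η²) - (2σ/R_*²)ξ)/(ρ_lR_*(ξ²+η²) + 2σ/R_*²). Then Λ > -(ρ_lR_*(ξ²+η²) + 2σ/R_*²). -/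
/-- The key algebraic inequality in the spectral bound: if
`2ρ_lR_*ξ + 4μ_l/R_* < 0` then
`Λ > -(ρ_lR_*(ξ²+η²) + 2σ/R_*²)`, where `Λ` is as displayed. -/
theorem Lambda_lower_bound (ρl Rs σ μl ξ η : ℝ)
    (hρl : 0 < ρl) (hRs : 0 < Rs) (hσ : 0 < σ) (hμl : 0 ≤ μl)
    (hsign : 2 * ρl * Rs * ξ + 4 * μl / Rs < 0) :
    -(ρl * Rs * (ξ ^ 2 + η ^ 2) + 2 * σ / Rs ^ 2) <
      ρl * Rs * (ξ ^ 2 - η ^ 2) + (4 * μl / Rs) * ξ - 2 * σ / Rs ^ 2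
        - (2 * ρl * Rs * ξ + 4 * μl / Rs) *
            (ρl * Rs * ξ * (ξ ^ 2 + η ^ 2) + (4 * μl / Rs) * (ξ ^ 2 + η ^ 2)
              - (2 * σ / Rs ^ 2) * ξ) /
            (ρl * Rs * (ξ ^ 2 + η ^ 2) + 2 * σ / Rs ^ 2) := by
  have hm : (0:ℝ) ≤ 4 * μl / Rs := by positivity
  have hs : (0:ℝ) < 2 * σ / Rs ^ 2 := by positivity
  have hξ : ξ < 0 := by nlinarith [mul_pos hρl hRs]
  set A : ℝ := ρl * Rs * (ξ ^ 2 - η ^ 2) + (4 * μl / Rs) * ξ - 2 * σ / Rs ^ 2 with hA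
  set B : ℝ := 2 * ρl * Rs * ξ + 4 * μl / Rs with hB
  set C : ℝ := ρl * Rs * ξ * (ξ ^ 2 + η ^ 2) + (4 * μl / Rs) * (ξ ^ 2 + η ^ 2)
      - (2 * σ / Rs ^ 2) * ξ with hC
  set D : ℝ := ρl * Rs * (ξ ^ 2 + η ^ 2) + 2 * σ / Rs ^ 2 with hD
  clear_value A B C D
  have hDpos : 0 < D := by
    have : (0:ℝ) ≤ ρl * Rs * (ξ ^ 2 + η ^ 2) := by positivity
    linarith
  have hid : A * D - B * C + D * D
      = B * (2 * (2 * σ / Rs ^ 2) * ξ - (4 * μl / Rs) * (ξ ^ 2 + η ^ 2)) := by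
    rw [hA, hB, hC, hD]; ring
  have hfac : 0 < B * (2 * (2 * σ / Rs ^ 2) * ξ - (4 * μl / Rs) * (ξ ^ 2 + η ^ 2)) := by
    have hq : (0:ℝ) ≤ (4 * μl / Rs) * (ξ ^ 2 + η ^ 2) := by positivity
    have h1 : 2 * (2 * σ / Rs ^ 2) * ξ - (4 * μl / Rs) * (ξ ^ 2 + η ^ 2) < 0 := by nlinarith
    exact mul_pos_of_neg_of_neg hsign h1
  have h1 : -D * D < A * D - B * C := by linarith
  have h2 : -D < (A * D - B * C) / D := by rw [lt_div_iff₀ hDpos]; linarith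
  have heq : (A * D - B * C) / D = A - B * C / D := by field_simp
  rw [heq] at h2
  exact h2
end
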